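/- If E₁, E₂, E₃ : ℝ → ℝ³ is a differentiable orthonormal frame, then there exists a (unique) vector field Ω : ℝ → ℝ³ such that Eᵢ'(s) = Ω(s) × Eᵢ(s) for all i and all s. -/

import Mathlib

open Matrix

/-- For a differentiable orthonormal frame `E₁,E₂,E₃ : ℝ → ℝ³` there is a unique
vector field `Ω` with `Eᵢ'(s) = Ω(s) × Eᵢ(s)` for all `i` and `s`. -/
theorem stmt_3 (E E' : Fin 3 → ℝ → (Fin 3 → ℝ))
    (horth : ∀ s i j, E i s ⬝ᵥ E j s = if i = j then 1 else 0)
    (hderiv : ∀ i s, HasDerivAt (E i) (E' i s) s) :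
    ∃! Ω : ℝ → (Fin 3 → ℝ), ∀ s i, E' i s = crossProduct (Ω s) (E i s) := by
  classical
  -- column orthonormality: ∑ i, E i s k * E i s l = δ k l
  have hcol : ∀ s k l, (∑ i : Fin 3, E i s k * E i s l) = if k = l then 1 else 0 := by
    intro s k l
    set M : Matrix (Fin 3) (Fin 3) ℝ := fun i k => E i s k with hM
    have h1 : M * Mᵀ = 1 := by
      ext i j
      have := horth s i j
      simp only [dotProduct] at this
      simp_rw [Matrix.mul_apply, Matrix.transpose_apply]
      simp [Matrix.mul_apply, Matrix.transpose_apply, Matrix.one_apply, hM, this]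
    have h2 : Mᵀ * M = 1 := mul_eq_one_comm.mp h1
    have h3 := congrFun (congrFun h2 k) l
    simp_rw [Matrix.mul_apply, Matrix.transpose_apply] at h3
    simpa [Matrix.mul_apply, Matrix.transpose_apply, Matrix.one_apply, hM,
      mul_comm] using h3
  -- componentwise derivatives
  have hd : ∀ i (k : Fin 3) s, HasDerivAt (fun t => E i t k) (E' i s k) s :=
    fun i k s => (hasDerivAt_pi.mp (hderiv i s)) k
  -- antisymmetry of A k l := ∑ i, E' i s k * E i s l
  have hA : ∀ s (k l : Fin 3),
      (∑ i : Fin 3, E' i s k * E i s l) + (∑ i : Fin 3, E' i s l * E i s k) = 0 := by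
    intro s k l
    have hder : HasDerivAt (fun t => ∑ i : Fin 3, E i t k * E i t l)
        (∑ i : Fin 3, (E' i s k * E i s l + E i s k * E' i s l)) s :=
      HasDerivAt.fun_sum fun i _ => (hd i k s).mul (hd i l s)
    have hfun : (fun t => ∑ i : Fin 3, E i t k * E i t l)
        = fun _ : ℝ => (if k = l then (1 : ℝ) else 0) := funext fun t => hcol t k l
    rw [hfun] at hder
    have h0 : (∑ i : Fin 3, (E' i s k * E i s l + E i s k * E' i s l)) = 0 :=
      hder.unique (hasDerivAt_const s _)
    calc (∑ i : Fin 3, E' i s k * E i s l) + (∑ i : Fin 3, E' i s l * E i s k)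
        = ∑ i : Fin 3, (E' i s k * E i s l + E i s k * E' i s l) := by
          rw [← Finset.sum_add_distrib]
          exact Finset.sum_congr rfl fun i _ => by ring
      _ = 0 := h0
  -- action of A on the frame
  have hAE : ∀ s j (k : Fin 3),
      E' j s k = ∑ l : Fin 3, (∑ i : Fin 3, E' i s k * E i s l) * E j s l := by
    intro s j k
    have : (∑ l : Fin 3, (∑ i : Fin 3, E' i s k * E i s l) * E j s l)
        = ∑ i : Fin 3, E' i s k * (E i s ⬝ᵥ E j s) := by
      simp only [Finset.sum_mul, dotProduct, Finset.mul_sum]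
      rw [Finset.sum_comm]
      exact Finset.sum_congr rfl fun i _ => Finset.sum_congr rfl fun l _ => by ring
    rw [this]
    simp [horth s]
  refine ⟨fun s => ![∑ i : Fin 3, E' i s 2 * E i s 1,
                     ∑ i : Fin 3, E' i s 0 * E i s 2,
                     ∑ i : Fin 3, E' i s 1 * E i s 0], ?_, ?_⟩
  · intro s j
    funext k
    have h := hAE s j
    have h0 := h 0; have h1 := h 1; have h2 := h 2
    rw [Fin.sum_univ_three] at h0 h1 h2
    fin_cases k <;> simp only [cross_apply] <;> simp
    · linear_combination h0 + E j s 1 * hA s 0 1 + (E j s 0 / 2) * hA s 0 0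
    · linear_combination h1 + E j s 2 * hA s 1 2 + (E j s 1 / 2) * hA s 1 1
    · linear_combination h2 + E j s 0 * hA s 2 0 + (E j s 2 / 2) * hA s 2 2
  · intro W hW
    funext s
    have hX0 : ∀ i, E' i s 0 = W s 1 * E i s 2 - W s 2 * E i s 1 := fun i => by
      have := congrFun (hW s i) 0; simpa [cross_apply] using this
    have hX1 : ∀ i, E' i s 1 = W s 2 * E i s 0 - W s 0 * E i s 2 := fun i => by
      have := congrFun (hW s i) 1; simpa [cross_apply] using this
    have hX2 : ∀ i, E' i s 2 = W s 0 * E i s 1 - W s 1 * E i s 0 := fun i => by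
      have := congrFun (hW s i) 2; simpa [cross_apply] using this
    have c00 : (∑ i : Fin 3, E i s 0 * E i s 0) = 1 := by simpa using hcol s 0 0
    have c11 : (∑ i : Fin 3, E i s 1 * E i s 1) = 1 := by simpa using hcol s 1 1
    have c22 : (∑ i : Fin 3, E i s 2 * E i s 2) = 1 := by simpa using hcol s 2 2
    have c01 : (∑ i : Fin 3, E i s 0 * E i s 1) = 0 := by simpa using hcol s 0 1
    have c02 : (∑ i : Fin 3, E i s 0 * E i s 2) = 0 := by simpa using hcol s 0 2
    have c12 : (∑ i : Fin 3, E i s 1 * E i s 2) = 0 := by simpa using hcol s 1 2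
    rw [Fin.sum_univ_three] at c00 c11 c22 c01 c02 c12
    funext k
    fin_cases k <;> simp <;> rw [Fin.sum_univ_three]
    · linear_combination (-(E 0 s 1)) * hX2 0 + (-(E 1 s 1)) * hX2 1 + (-(E 2 s 1)) * hX2 2
        - W s 0 * c11 + W s 1 * c01
    · linear_combination (-(E 0 s 2)) * hX0 0 + (-(E 1 s 2)) * hX0 1 + (-(E 2 s 2)) * hX0 2
        - W s 1 * c22 + W s 2 * c12
    · linear_combination (-(E 0 s 0)) * hX1 0 + (-(E 1 s 0)) * hX1 1 + (-(E 2 s 0)) * hX1 2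
        - W s 2 * c00 + W s 0 * c02
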